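/- For arbitrary complex numbers z_1, ..., z_n, the sum of |z_i|^2 is at most one half of the quantity (sum of |z_i|)^2 + |sum of z_i|^2. -/

import Mathlib

theorem sum_sq_abs_le_half (n : ℕ) (z : Fin n → ℂ) :
    ∑ i, ‖z i‖ ^ 2 ≤
      (1 / 2) * ((∑ i, ‖z i‖) ^ 2 + ‖∑ i, z i‖ ^ 2) := by
  have h1 : (∑ i, ‖z i‖) ^ 2
      = ∑ i, ∑ j, ‖z i‖ * ‖z j‖ := by
    rw [sq, Finset.sum_mul_sum]
  have h2 : ‖∑ i, z i‖ ^ 2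
      = ∑ i, ∑ j, (z i * (starRingEnd ℂ) (z j)).re := by
    have : ((∑ i, z i) * (starRingEnd ℂ) (∑ i, z i)).re
        = ∑ i, ∑ j, (z i * (starRingEnd ℂ) (z j)).re := by
      rw [map_sum, Finset.sum_mul_sum, Complex.re_sum]
      exact Finset.sum_congr rfl fun i _ => (Complex.re_sum _ _)
    rw [Complex.sq_norm, ← this, Complex.mul_conj, Complex.ofReal_re]
  have key : ∀ i j : Fin n,
      (if i = j then 2 * ‖z i‖ ^ 2 else 0)
        ≤ ‖z i‖ * ‖z j‖ + (z i * (starRingEnd ℂ) (z j)).re := by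
    intro i j
    by_cases h : i = j
    · subst h
      simp only [eq_self_iff_true, if_true]
      rw [Complex.mul_conj, Complex.ofReal_re, ← Complex.sq_norm (z i), ← pow_two]
      linarith
    · simp only [if_neg h]
      have := Complex.abs_re_le_norm (z i * (starRingEnd ℂ) (z j))
      rw [norm_mul, Complex.norm_conj] at this
      linarith [neg_abs_le ((z i * (starRingEnd ℂ) (z j)).re)]
  have hsum : ∑ i, 2 * ‖z i‖ ^ 2
      ≤ (∑ i, ‖z i‖) ^ 2 + ‖∑ i, z i‖ ^ 2 := by
    rw [h1, h2, ← Finset.sum_add_distrib]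
    calc ∑ i, 2 * ‖z i‖ ^ 2
        = ∑ i, ∑ j, (if i = j then 2 * ‖z i‖ ^ 2 else 0) := by
          refine Finset.sum_congr rfl fun i _ => ?_
          rw [Finset.sum_ite_eq Finset.univ i (fun _ => 2 * ‖z i‖ ^ 2)]
          simp
      _ ≤ ∑ i, ∑ j, (‖z i‖ * ‖z j‖
            + (z i * (starRingEnd ℂ) (z j)).re) := by
          refine Finset.sum_le_sum fun i _ => Finset.sum_le_sum fun j _ => key i j
      _ = ∑ i, (∑ j, ‖z i‖ * ‖z j‖
            + ∑ j, (z i * (starRingEnd ℂ) (z j)).re) := by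
          refine Finset.sum_congr rfl fun i _ => ?_
          rw [Finset.sum_add_distrib]
      _ = _ := by rw [Finset.sum_add_distrib]
  have h3 : ∑ i, 2 * ‖z i‖ ^ 2 = 2 * ∑ i, ‖z i‖ ^ 2 := by
    rw [Finset.mul_sum]
  linarith
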